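/- arXiv:1707.01774 — 2 statements merged into one kernel-verified Lean document; each statement's English description precedes it below -/
import Mathlib

section
/- A polynomial with real coefficients whose roots are all real has exactly as many positive roots (counted with multiplicity) as there are sign changes in its sequence of nonzero coefficients. -/
open Polynomial

/-- The list of nonzero coefficients of a real polynomial, in order. -/
noncomputable def nonzeroCoeffList (p : ℝ[X]) : List ℝ :=
  ((List.range (p.natDegree + 1)).map p.coeff).filter (fun a => decide (a ≠ 0))

/-- The number of sign changes in the sequence of nonzero coefficients. -/
noncomputable def signChanges (p : ℝ[X]) : ℕ :=
  ((nonzeroCoeffList p).zip (nonzeroCoeffList p).tail).countP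
    (fun ab => decide (ab.1 * ab.2 < 0))




namespace Descartes


/-- sign changes of a list (meant for zero-free lists) -/
noncomputable def V0 (l : List ℝ) : ℕ :=
  (l.zip l.tail).countP (fun ab => decide (ab.1 * ab.2 < 0))

@[simp] lemma V0_nil : V0 [] = 0 := rfl
@[simp] lemma V0_single (a : ℝ) : V0 [a] = 0 := rfl

lemma V0_cons_cons (a b : ℝ) (t : List ℝ) :
    V0 (a :: b :: t) = (if a * b < 0 then 1 else 0) + V0 (b :: t) := by
  simp only [V0, List.tail_cons, List.zip_cons_cons, List.countP_cons]
  by_cases h : a * b < 0 <;> simp [h] <;> omega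

lemma V0_le_cons (a : ℝ) (t : List ℝ) : V0 t ≤ V0 (a :: t) := by
  cases t with
  | nil => simp
  | cons b t => rw [V0_cons_cons]; omega

lemma sign_trans {a b c : ℝ} (h1 : a * b < 0) (h2 : 0 < b * c) : a * c < 0 := by
  by_contra hc
  push_neg at hc
  have h3 : a * b * (b * c) < 0 := mul_neg_of_neg_of_pos h1 h2
  nlinarith [mul_nonneg hc (mul_self_nonneg b)]

lemma sign_trans' {a b c : ℝ} (h1 : 0 < a * b) (h2 : 0 < b * c) : 0 < a * c := by
  rcases lt_trichotomy (a * c) 0 with h3 | h3 | h3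
  · have h4 : 0 < a * b * (b * c) := mul_pos h1 h2
    nlinarith [mul_nonpos_of_nonpos_of_nonneg h3.le (mul_self_nonneg b)]
  · have : a = 0 ∨ c = 0 := mul_eq_zero.mp h3
    rcases this with rfl | rfl
    · simp at h1
    · simp at h2
  · exact h3

/-- Extraction: from a zero-free list, extract an alternating sublist of length V0+1
whose head has the same sign as the head and whose last entry is the last entry. -/
lemma exists_alt : ∀ (l : List ℝ), (∀ x ∈ l, x ≠ 0) → l ≠ [] →
    ∃ s : List ℝ, s.Sublist l ∧ s.Chain' (fun a b => a * b < 0) ∧ s.length = V0 l + 1 ∧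
      (∀ x ∈ s.head?, ∀ y ∈ l.head?, 0 < x * y) ∧ s.getLast? = l.getLast?
  | [], _, h => absurd rfl h
  | [a], h, _ => by
    refine ⟨[a], List.Sublist.refl _, List.isChain_singleton _, by simp, ?_, rfl⟩
    intro x hx y hy
    simp only [List.head?_cons, Option.mem_def, Option.some.injEq] at hx hy
    subst hx; subst hy
    exact mul_self_pos.mpr (h a (by simp))
  | a :: b :: t, h, _ => by
    have hb : ∀ x ∈ b :: t, x ≠ 0 := fun x hx => h x (List.mem_cons_of_mem _ hx)
    obtain ⟨s', hsub, hchain, hlen, hhead, hlast⟩ := exists_alt (b :: t) hb (by simp)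
    have hs'ne : s' ≠ [] := by
      intro hh; rw [hh] at hlen; simp at hlen
    obtain ⟨c, s₁, rfl⟩ : ∃ c s₁, s' = c :: s₁ := by
      cases s' with
      | nil => exact absurd rfl hs'ne
      | cons c s₁ => exact ⟨c, s₁, rfl⟩
    have hcb : 0 < c * b := hhead c rfl b rfl
    have ha0 : a ≠ 0 := h a (by simp)
    by_cases hab : a * b < 0
    · refine ⟨a :: c :: s₁, hsub.cons₂ _, ?_, ?_, ?_, ?_⟩
      · exact List.IsChain.cons_cons (sign_trans hab (by rw [mul_comm] at hcb; exact hcb)) hchain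
      · rw [V0_cons_cons, if_pos hab]
        simp only [List.length_cons] at hlen ⊢
        omega
      · intro x hx y hy
        simp only [List.head?_cons, Option.mem_def, Option.some.injEq] at hx hy
        subst hx; subst hy; exact mul_self_pos.mpr ha0
      · rw [List.getLast?_cons_cons, hlast, List.getLast?_cons_cons]
    · have hab' : 0 < a * b := by
        rcases lt_trichotomy (a * b) 0 with h1 | h1 | h1
        · exact absurd h1 hab
        · exact absurd (mul_eq_zero.mp h1) (by push_neg; exact ⟨ha0, hb b (by simp)⟩)
        · exact h1
      refine ⟨c :: s₁, hsub.cons _, hchain, ?_, ?_, ?_⟩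
      · rw [V0_cons_cons, if_neg hab]; simpa using hlen
      · intro x hx y hy
        simp only [List.head?_cons, Option.mem_def, Option.some.injEq] at hx hy
        subst hx; subst hy
        exact sign_trans' hcb (by rw [mul_comm] at hab'; exact hab')
      · rw [List.getLast?_cons_cons]; exact hlast

/-- Upper bound: any alternating sublist of a zero-free list has length ≤ V0+1;
strictly better if its head disagrees in sign with the head. -/
lemma alt_le : ∀ (l : List ℝ), (∀ x ∈ l, x ≠ 0) → ∀ s : List ℝ, s.Sublist l →
    s.Chain' (fun a b => a * b < 0) →
    s.length ≤ V0 l + 1 ∧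
      (∀ x ∈ s.head?, ∀ y ∈ l.head?, x * y < 0 → s.length ≤ V0 l)
  | [], _, s, hs, _ => by
    rw [List.sublist_nil.mp hs]; simp
  | a :: t, h, s, hs, hchain => by
    have ht : ∀ x ∈ t, x ≠ 0 := fun x hx => h x (List.mem_cons_of_mem _ hx)
    have ha0 : a ≠ 0 := h a (by simp)
    rcases List.sublist_cons_iff.mp hs with hs' | ⟨r, rfl, hr⟩
    · -- s <+ t
      constructor
      · calc s.length ≤ V0 t + 1 := (alt_le t ht s hs' hchain).1
          _ ≤ V0 (a :: t) + 1 := by have := V0_le_cons a t; omega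
      · intro x hx y hy hxy
        simp only [List.head?_cons, Option.mem_def, Option.some.injEq] at hy
        subst hy
        cases s with
        | nil => simp
        | cons c s₁ =>
          simp only [List.head?_cons, Option.mem_def, Option.some.injEq] at hx
          subst hx
          have htne : t ≠ [] := by
            intro hh; subst hh; simpa using hs'
          obtain ⟨b, t', rfl⟩ : ∃ b t', t = b :: t' := by
            cases t with
            | nil => exact absurd rfl htne
            | cons b t' => exact ⟨b, t', rfl⟩
          by_cases hab : a * b < 0
          · rw [V0_cons_cons, if_pos hab]
            have := (alt_le (b :: t') ht _ hs' hchain).1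
            omega
          · have hab' : 0 < a * b := by
              rcases lt_trichotomy (a * b) 0 with h1 | h1 | h1
              · exact absurd h1 hab
              · exact absurd (mul_eq_zero.mp h1) (by push_neg; exact ⟨ha0, ht b (by simp)⟩)
              · exact h1
            rw [V0_cons_cons, if_neg hab, zero_add]
            have hxb : c * b < 0 := sign_trans hxy hab'
            exact (alt_le (b :: t') ht _ hs' hchain).2 c rfl b rfl hxb
    · -- s = a :: r
      cases r with
      | nil =>
        constructor
        · simp
        · intro x hx y hy hxy
          simp only [List.head?_cons, Option.mem_def, Option.some.injEq] at hx hy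
          subst hx; subst hy; nlinarith
      | cons c s₁ =>
        have hac : a * c < 0 := List.isChain_cons_cons.mp hchain |>.1
        have hchain₁ : (c :: s₁).Chain' (fun a b => a * b < 0) :=
          List.isChain_cons_cons.mp hchain |>.2
        have htne : t ≠ [] := by
          intro hh; subst hh; simpa using hr
        obtain ⟨b, t', rfl⟩ : ∃ b t', t = b :: t' := by
          cases t with
          | nil => exact absurd rfl htne
          | cons b t' => exact ⟨b, t', rfl⟩
        constructor
        · by_cases hab : a * b < 0
          · rw [V0_cons_cons, if_pos hab]
            have := (alt_le (b :: t') ht _ hr hchain₁).1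
            simp only [List.length_cons] at *
            omega
          · have hab' : 0 < a * b := by
              rcases lt_trichotomy (a * b) 0 with h1 | h1 | h1
              · exact absurd h1 hab
              · exact absurd (mul_eq_zero.mp h1) (by push_neg; exact ⟨ha0, ht b (by simp)⟩)
              · exact h1
            rw [V0_cons_cons, if_neg hab, zero_add]
            have hcb : c * b < 0 := by
              rw [mul_comm] at hac
              exact sign_trans hac hab'
            have := (alt_le (b :: t') ht _ hr hchain₁).2 c rfl b rfl hcb
            simp only [List.length_cons] at this ⊢
            omega
        · intro x hx y hy hxy
          simp only [List.head?_cons, Option.mem_def, Option.some.injEq] at hx hy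
          subst hx; subst hy; nlinarith



/-- pairs in the zip with the tail are chain-adjacent pairs -/
lemma chain'_mem_zip {α : Type*} {R : α → α → Prop} :
    ∀ {l : List α}, l.Chain' R → ∀ pr ∈ l.zip l.tail, R pr.1 pr.2
  | [], _, pr, h => by simp at h
  | [a], _, pr, h => by simp at h
  | a :: b :: t, hc, pr, h => by
    rw [List.tail_cons, List.zip_cons_cons] at h
    rcases List.mem_cons.mp h with rfl | h'
    · exact (List.isChain_cons_cons.mp hc).1
    · exact chain'_mem_zip (List.isChain_cons_cons.mp hc).2 pr h'

lemma mem_le_getLast : ∀ {l : List ℕ}, l.Chain' (· < ·) → ∀ x ∈ l, ∀ y ∈ l.getLast?, x ≤ y := by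
  intro l hl x hx y hy
  have hne : l ≠ [] := by rintro rfl; simp at hx
  have h2 := List.dropLast_append_getLast? y hy
  have hp : l.Pairwise (· < ·) := List.isChain_iff_pairwise.mp hl
  rw [← h2] at hp hx
  rcases List.mem_append.mp hx with h | h
  · have := (List.pairwise_append.mp hp).2.2 x h y (by simp)
    omega
  · simp at h; omega

lemma chain_lt_sublist_range : ∀ (N : ℕ) (K : List ℕ), K.Chain' (· < ·) →
    (∀ x ∈ K, x < N) → K.Sublist (List.range N) := by
  intro N
  induction N with
  | zero =>
    intro K _ hmem
    cases K with
    | nil => simp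
    | cons a t => exact absurd (hmem a (by simp)) (by omega)
  | succ N ih =>
    intro K hK hmem
    by_cases hN : N ∈ K
    · have hKne : K ≠ [] := by rintro rfl; simp at hN
      have hlast : K.getLast hKne = N := by
        have h1 := mem_le_getLast hK N hN (K.getLast hKne) (List.getLast?_eq_getLast hKne ▸ rfl)
        have h2 := hmem (K.getLast hKne) (List.getLast_mem hKne)
        omega
      have hsplit := List.dropLast_append_getLast hKne
      rw [hlast] at hsplit
      have hp : K.Pairwise (· < ·) := List.isChain_iff_pairwise.mp hK
      rw [← hsplit] at hp
      have hdrop : ∀ x ∈ K.dropLast, x < N := by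
        intro x hx
        exact (List.pairwise_append.mp hp).2.2 x hx N (by simp)
      have hchain' : K.dropLast.Chain' (· < ·) :=
        ((List.pairwise_append.mp hp).1).isChain
      have := (ih K.dropLast hchain' hdrop).append (List.Sublist.refl [N])
      rw [hsplit, ← List.range_succ] at this
      exact this
    · have : ∀ x ∈ K, x < N := by
        intro x hx
        have := hmem x hx
        rcases Nat.lt_succ_iff_lt_or_eq.mp this with h | rfl
        · exact h
        · exact absurd hx hN
      exact (ih K hK this).trans (by rw [List.range_succ]; exact List.sublist_append_left _ _)

/-- index list of nonzero coefficients -/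
noncomputable def idxList (p : ℝ[X]) : List ℕ :=
  (List.range (p.natDegree + 1)).filter (fun i => decide (p.coeff i ≠ 0))

lemma nonzeroCoeffList_eq_map (p : ℝ[X]) :
    nonzeroCoeffList p = (idxList p).map p.coeff := by
  rw [nonzeroCoeffList, idxList, List.filter_map]
  rfl

lemma mem_idxList {p : ℝ[X]} {i : ℕ} :
    i ∈ idxList p ↔ i < p.natDegree + 1 ∧ p.coeff i ≠ 0 := by
  simp [idxList]

lemma idxList_chain (p : ℝ[X]) : (idxList p).Chain' (· < ·) :=
  (((List.pairwise_lt_range (n := _))).sublist (List.filter_sublist (l := _))).isChain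

lemma natDegree_mem_idxList {p : ℝ[X]} (hp : p ≠ 0) : p.natDegree ∈ idxList p :=
  mem_idxList.mpr ⟨Nat.lt_succ_self _, fun h => hp (leadingCoeff_eq_zero.mp h)⟩

lemma idxList_getLast? {p : ℝ[X]} (hp : p ≠ 0) :
    (idxList p).getLast? = some p.natDegree := by
  have hne : idxList p ≠ [] := fun h => by
    have := natDegree_mem_idxList hp; rw [h] at this; simp at this
  rw [List.getLast?_eq_getLast hne]
  congr 1
  have h1 := mem_le_getLast (idxList_chain p) p.natDegree (natDegree_mem_idxList hp)
    ((idxList p).getLast hne) (List.getLast?_eq_getLast hne ▸ rfl)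
  have h2 := mem_idxList.mp (List.getLast_mem hne) |>.1
  omega

lemma idxList_head? {p : ℝ[X]} (hp : p.coeff 0 ≠ 0) :
    (idxList p).head? = some 0 := by
  rw [idxList, List.range_succ_eq_map, List.filter_cons_of_pos (by simpa using hp)]
  rfl

/-- signChanges as a count over index pairs -/
lemma signChanges_eq_idx (p : ℝ[X]) :
    signChanges p = ((idxList p).zip (idxList p).tail).countP
      (fun pr => decide (p.coeff pr.1 * p.coeff pr.2 < 0)) := by
  rw [signChanges, nonzeroCoeffList_eq_map, ← List.map_tail, List.zip_map,
    List.countP_map]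
  rfl


end Descartes

namespace Descartes

/-- Any strictly increasing index chain with alternating-sign coefficients
bounds signChanges from below. -/
lemma signChanges_ge_of_chain (p : ℝ[X]) (K : List ℕ)
    (hK : K.Chain' (· < ·))
    (hmem : ∀ i ∈ K, i < p.natDegree + 1 ∧ p.coeff i ≠ 0)
    (halt : K.Chain' (fun i j => p.coeff i * p.coeff j < 0)) :
    K.length ≤ signChanges p + 1 := by
  have hsub : K.Sublist (idxList p) := by
    have h1 : K.Sublist (List.range (p.natDegree + 1)) :=
      chain_lt_sublist_range _ K hK (fun x hx => (hmem x hx).1)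
    have h2 : K.filter (fun i => decide (p.coeff i ≠ 0)) = K :=
      List.filter_eq_self.mpr (fun a ha => by simpa using (hmem a ha).2)
    have h3 := h1.filter (fun i => decide (p.coeff i ≠ 0))
    rwa [h2] at h3
  have hmap : (K.map p.coeff).Sublist (nonzeroCoeffList p) := by
    rw [nonzeroCoeffList_eq_map]; exact hsub.map _
  have hchain : (K.map p.coeff).Chain' (fun a b => a * b < 0) :=
    (List.isChain_map _).mpr halt
  have h0 : ∀ x ∈ nonzeroCoeffList p, x ≠ 0 := by
    intro x hx
    rw [nonzeroCoeffList] at hx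
    simpa using (List.of_mem_filter hx)
  have := (alt_le (nonzeroCoeffList p) h0 (K.map p.coeff) hmap hchain).1
  simpa [signChanges, V0] using this

/-- Extract a maximal alternating index chain, ending at an index whose
coefficient equals the leading coefficient. -/
lemma exists_chain (p : ℝ[X]) (hp : p ≠ 0) :
    ∃ L : List ℕ, L.Chain' (· < ·) ∧
      (∀ i ∈ L, i < p.natDegree + 1 ∧ p.coeff i ≠ 0) ∧
      L.Chain' (fun i j => p.coeff i * p.coeff j < 0) ∧
      L.length = signChanges p + 1 ∧
      (∃ m, L.getLast? = some m ∧ p.coeff m = p.coeff p.natDegree) := by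
  have h0 : ∀ x ∈ nonzeroCoeffList p, x ≠ 0 := by
    intro x hx
    rw [nonzeroCoeffList] at hx
    simpa using (List.of_mem_filter hx)
  have hne : nonzeroCoeffList p ≠ [] := by
    rw [nonzeroCoeffList_eq_map]
    intro h
    have := natDegree_mem_idxList hp
    rw [List.map_eq_nil_iff.mp h] at this
    simp at this
  obtain ⟨s, hsub, hchain, hlen, _, hlast⟩ := exists_alt (nonzeroCoeffList p) h0 hne
  rw [nonzeroCoeffList_eq_map] at hsub
  obtain ⟨L, hL, rfl⟩ := List.sublist_map_iff.mp hsub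
  have hpairK : L.Pairwise (· < ·) :=
    (List.isChain_iff_pairwise.mp (idxList_chain p)).sublist hL
  refine ⟨L, hpairK.isChain, fun i hi => mem_idxList.mp (hL.subset hi), ?_, ?_, ?_⟩
  · exact (List.isChain_map _).mp hchain
  · rw [List.length_map] at hlen; exact hlen
  · have hLne : L ≠ [] := by
      rintro rfl
      rw [List.map_nil] at hlen; simp at hlen
    refine ⟨L.getLast hLne, List.getLast?_eq_getLast hLne, ?_⟩
    rw [nonzeroCoeffList_eq_map] at hlast
    rw [List.getLast?_map, List.getLast?_map, List.getLast?_eq_getLast hLne,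
      idxList_getLast? hp] at hlast
    simpa using hlast

end Descartes

namespace Descartes
lemma sign_mix {x y z : ℝ} (h1 : 0 < x * y) (h2 : y * z < 0) : x * z < 0 := by
  have h3 : z * y < 0 := by rwa [mul_comm] at h2
  have h4 : 0 < y * x := by rwa [mul_comm] at h1
  have h5 := sign_trans h3 h4
  rwa [mul_comm] at h5

lemma sign_opp_opp {a b c : ℝ} (h1 : a * c < 0) (h2 : b * c < 0) : 0 < a * b := by
  by_contra h
  push_neg at h
  nlinarith [mul_pos_of_neg_of_neg h1 h2, mul_nonpos_of_nonpos_of_nonneg h (mul_self_nonneg c)]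


/-- Abstract construction of an alternating chain for the product polynomial. -/
lemma construct (A B b : ℕ → ℝ)
    (hsign : ∀ m, A m ≠ 0 → B m * A m < 0)
    (hBB : ∀ i j, A i * A j < 0 → B i * B j < 0)
    (hS1 : ∀ m, B m ≠ 0 → ∃ k, k ≤ m ∧ 0 < b k * B m)
    (hS2 : ∀ i j, i < j → B i * B j < 0 → ∃ k, i < k ∧ k ≤ j ∧ 0 < b k * B j) :
    ∀ L : List ℕ, L ≠ [] → L.Chain' (· < ·) →
      L.Chain' (fun i j => A i * A j < 0) → (∀ i ∈ L, A i ≠ 0) →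
      ∃ K : List ℕ, K.Chain' (· < ·) ∧ K.Chain' (fun i j => b i * b j < 0) ∧
        (∀ i ∈ K, b i ≠ 0) ∧ K.length = L.length ∧
        ∃ kl ll, K.getLast? = some kl ∧ L.getLast? = some ll ∧ kl ≤ ll ∧ b kl * A ll < 0 := by
  intro L
  induction L using List.reverseRecOn with
  | nil => intro h; exact absurd rfl h
  | append_singleton L j IH =>
    intro _ hlt hprod hA0
    have hAj : A j ≠ 0 := hA0 j (by simp)
    have hBj : B j ≠ 0 := by
      intro h
      have := hsign j hAj
      rw [h, zero_mul] at this
      exact lt_irrefl _ this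
    cases L with
    | nil =>
      obtain ⟨k, hk, hkB⟩ := hS1 j hBj
      refine ⟨[k], List.isChain_singleton _, List.isChain_singleton _, ?_, by simp, k, j, rfl, rfl, hk, ?_⟩
      · intro i hi
        simp at hi; subst hi
        intro h0
        rw [h0, zero_mul] at hkB
        exact lt_irrefl _ hkB
      · exact sign_mix hkB (hsign j hAj)
    | cons i0 L0 =>
      have hLne : (i0 :: L0) ≠ [] := by simp
      have hlt' := (List.isChain_append.mp hlt)
      have hprod' := (List.isChain_append.mp hprod)
      obtain ⟨K, hKlt, hKprod, hKne0, hKlen, kl, ll, hKlast, hLlast, hklll, hbkl⟩ :=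
        IH hLne hlt'.1 hprod'.1 (fun i hi => hA0 i (List.mem_append_left _ hi))
      have hllj : ll < j := hlt'.2.2 ll hLlast j rfl
      have hAllj : A ll * A j < 0 := hprod'.2.2 ll hLlast j rfl
      have hBllj : B ll * B j < 0 := hBB ll j hAllj
      obtain ⟨k, hk1, hk2, hkB⟩ := hS2 ll j hllj hBllj
      have hbkAj : b k * A j < 0 := sign_mix hkB (hsign j hAj)
      have hbkAll : 0 < b k * A ll := by
        exact sign_opp_opp hbkAj hAllj
      have hbklbk : b kl * b k < 0 :=
        sign_trans hbkl (by rwa [mul_comm] at hbkAll)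
      have hKne : K ≠ [] := by
        rintro rfl; simp at hKlast
      refine ⟨K ++ [k], ?_, ?_, ?_, ?_, k, j, ?_, ?_, hk2, hbkAj⟩
      · exact List.isChain_append.mpr ⟨hKlt, List.isChain_singleton _,
          fun x hx y hy => by
            simp at hy; subst hy
            rw [hKlast] at hx; simp at hx; subst hx
            omega⟩
      · exact List.isChain_append.mpr ⟨hKprod, List.isChain_singleton _,
          fun x hx y hy => by
            simp at hy; subst hy
            rw [hKlast] at hx; simp at hx; subst hx
            exact hbklbk⟩
      · intro i hi
        rcases List.mem_append.mp hi with h | h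
        · exact hKne0 i h
        · simp at h; subst h
          intro h0; rw [h0, zero_mul] at hkB; exact lt_irrefl _ hkB
      · simp [hKlen]
      · exact List.getLast?_concat (l := _)
      · have h := List.getLast?_concat (l := i0 :: L0) (a := j)
        simpa using h
end Descartes
namespace Descartes

lemma coeff_mul_X_sub_C_zero (q : ℝ[X]) (r : ℝ) :
    ((X - C r) * q).coeff 0 = -(r * q.coeff 0) := by
  rw [sub_mul, coeff_sub, mul_coeff_zero, coeff_X_zero, zero_mul, coeff_C_mul, zero_sub]

lemma coeff_mul_X_sub_C_succ (q : ℝ[X]) (r : ℝ) (k : ℕ) :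
    ((X - C r) * q).coeff (k + 1) = q.coeff k - r * q.coeff (k + 1) := by
  rw [sub_mul, coeff_sub, coeff_X_mul, coeff_C_mul]

lemma Bval (q : ℝ[X]) (r : ℝ) (m : ℕ) :
    ∑ k ∈ Finset.range (m + 1), ((X - C r) * q).coeff k * r ^ k
      = -(r ^ (m + 1)) * q.coeff m := by
  induction m with
  | zero => simp [coeff_mul_X_sub_C_zero]
  | succ m ih =>
    rw [Finset.sum_range_succ, ih, coeff_mul_X_sub_C_succ]
    ring

/-- The key lemma: multiplying by a factor with a positive root adds at least one
sign change. -/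
lemma signChanges_mul_X_sub_C (q : ℝ[X]) (hq : q ≠ 0) (r : ℝ) (hr : 0 < r) :
    signChanges q + 1 ≤ signChanges ((X - C r) * q) := by
  have hXr : (X - C r : ℝ[X]) ≠ 0 := X_sub_C_ne_zero r
  have hp0 : (X - C r) * q ≠ 0 := mul_ne_zero hXr hq
  have hpdeg : ((X - C r) * q).natDegree = q.natDegree + 1 := by
    rw [natDegree_mul hXr hq, natDegree_X_sub_C]; omega
  set n := q.natDegree with hn
  set p := (X - C r) * q with hp
  set b : ℕ → ℝ := fun k => p.coeff k with hb
  set A : ℕ → ℝ := fun k => q.coeff k with hA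
  set B : ℕ → ℝ := fun m => ∑ k ∈ Finset.range (m + 1), b k * r ^ k with hB
  have hBval : ∀ m, B m = -(r ^ (m + 1)) * A m := fun m => Bval q r m
  have hsign : ∀ m, A m ≠ 0 → B m * A m < 0 := by
    intro m hm
    rw [hBval m]
    have h1 : 0 < r ^ (m + 1) := pow_pos hr _
    have h2 : 0 < A m * A m := mul_self_pos.mpr hm
    nlinarith
  have hBB : ∀ i j, A i * A j < 0 → B i * B j < 0 := by
    intro i j hij
    rw [hBval i, hBval j]
    have h1 : 0 < r ^ (i + 1) := pow_pos hr _
    have h2 : 0 < r ^ (j + 1) := pow_pos hr _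
    nlinarith [mul_neg_of_pos_of_neg (mul_pos h1 h2) hij]
  have hS1 : ∀ m, B m ≠ 0 → ∃ k, k ≤ m ∧ 0 < b k * B m := by
    intro m hm
    by_contra hcon
    push_neg at hcon
    have h1 : B m * B m = ∑ k ∈ Finset.range (m + 1), (b k * B m) * r ^ k := by
      simp only [hB]
      rw [Finset.sum_mul]
      exact Finset.sum_congr rfl (fun k _ => by ring)
    have h2 : ∑ k ∈ Finset.range (m + 1), (b k * B m) * r ^ k ≤ 0 :=
      Finset.sum_nonpos fun k hk =>
        mul_nonpos_of_nonpos_of_nonneg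
          (hcon k (by simp at hk; omega)) (pow_nonneg hr.le _)
    have h3 : 0 < B m * B m := mul_self_pos.mpr hm
    linarith
  have hS2 : ∀ i j, i < j → B i * B j < 0 → ∃ k, i < k ∧ k ≤ j ∧ 0 < b k * B j := by
    intro i j hij hBij
    by_contra hcon
    push_neg at hcon
    have hdiff : B j = B i + ∑ k ∈ Finset.Ico (i + 1) (j + 1), b k * r ^ k := by
      simp only [hB, Finset.range_eq_Ico]
      rw [← Finset.sum_Ico_consecutive _ (Nat.zero_le (i + 1)) (by omega : i+1 ≤ j+1)]
    have h1 : (B j - B i) * B j = ∑ k ∈ Finset.Ico (i + 1) (j + 1), (b k * B j) * r ^ k := by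
      have hd2 : B j - B i = ∑ k ∈ Finset.Ico (i + 1) (j + 1), b k * r ^ k := by
        rw [hdiff]; ring
      rw [hd2, Finset.sum_mul]
      exact Finset.sum_congr rfl (fun k _ => by ring)
    have h2 : ∑ k ∈ Finset.Ico (i + 1) (j + 1), (b k * B j) * r ^ k ≤ 0 :=
      Finset.sum_nonpos fun k hk => by
        simp only [Finset.mem_Ico] at hk
        exact mul_nonpos_of_nonpos_of_nonneg
          (hcon k (by omega) (by omega)) (pow_nonneg hr.le _)
    nlinarith [mul_self_nonneg (B j)]
  obtain ⟨L, hLlt, hLmem, hLprod, hLlen, m, hLlast, hm⟩ := exists_chain q hq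
  have hLne : L ≠ [] := by rintro rfl; simp at hLlen
  obtain ⟨K, hKlt, hKprod, hKne0, hKlen, kl, ll, hKlast, hLlast', hklll, hbkl⟩ :=
    construct A B b hsign hBB hS1 hS2 L hLne hLlt hLprod (fun i hi => (hLmem i hi).2)
  have hllm : ll = m := by rw [hLlast] at hLlast'; exact (Option.some.injEq _ _ ▸ hLlast'.symm)
  subst hllm
  have hlln : ll < n + 1 := (hLmem ll (List.mem_of_getLast? hLlast')).1
  have hKne : K ≠ [] := by rintro rfl; simp at hKlast
  have hKbound : ∀ i ∈ K, i ≤ kl := fun i hi => mem_le_getLast hKlt i hi kl hKlast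
  have hbtop : b (n + 1) = A n := by
    show p.coeff (n + 1) = q.coeff n
    rw [hp, coeff_mul_X_sub_C_succ]
    have h0 : q.coeff (n + 1) = 0 := by rw [hn]; exact coeff_natDegree_succ_eq_zero
    rw [h0]; ring
  have hAn0 : A n ≠ 0 := fun h => hq (leadingCoeff_eq_zero.mp h)
  have hKchain' : (K ++ [n + 1]).Chain' (· < ·) :=
    List.isChain_append.mpr ⟨hKlt, List.isChain_singleton _, fun x hx y hy => by
      simp at hy; subst hy
      rw [hKlast] at hx; simp at hx; subst hx
      omega⟩
  have hKprod' : (K ++ [n + 1]).Chain' (fun i j => b i * b j < 0) :=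
    List.isChain_append.mpr ⟨hKprod, List.isChain_singleton _, fun x hx y hy => by
      simp at hy; subst hy
      rw [hKlast] at hx; simp at hx; subst hx
      rw [hbtop]
      have hvll : A ll = A n := by show q.coeff ll = q.coeff n; rw [hn]; exact hm
      rw [hvll] at hbkl
      exact hbkl⟩
  have hKmem : ∀ i ∈ K ++ [n + 1], i < p.natDegree + 1 ∧ p.coeff i ≠ 0 := by
    intro i hi
    rcases List.mem_append.mp hi with h | h
    · exact ⟨by have := hKbound i h; omega, hKne0 i h⟩
    · simp at h; subst h
      refine ⟨by omega, ?_⟩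
      show b (n + 1) ≠ 0
      rw [hbtop]; exact hAn0
  have hfinal := signChanges_ge_of_chain p (K ++ [n + 1]) hKchain' hKmem hKprod'
  rw [List.length_append, hKlen, hLlen] at hfinal
  simp only [List.length_cons, List.length_nil] at hfinal
  omega

/-- Descartes inequality: number of positive roots ≤ sign changes. -/
lemma card_pos_roots_le : ∀ (N : ℕ) (p : ℝ[X]), p ≠ 0 →
    (p.roots.filter (fun x => 0 < x)).card = N →
    N ≤ signChanges p := by
  intro N
  induction N with
  | zero => omega
  | succ N ih =>
    intro p hp hcard
    have hex : ∃ r, r ∈ p.roots.filter (fun x => (0:ℝ) < x) := by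
      rw [← Multiset.card_pos_iff_exists_mem, hcard]; omega
    obtain ⟨r, hr⟩ := hex
    rw [Multiset.mem_filter] at hr
    obtain ⟨hroot, hrpos⟩ := hr
    have hisroot : p.IsRoot r := isRoot_of_mem_roots hroot
    set q := p /ₘ (X - C r) with hqdef
    have hfact : (X - C r) * q = p := mul_divByMonic_eq_iff_isRoot.mpr hisroot
    have hq0 : q ≠ 0 := by
      intro h; rw [h, mul_zero] at hfact; exact hp hfact.symm
    have hroots : p.roots = r ::ₘ q.roots := by
      rw [← hfact, roots_mul (hfact.symm ▸ hp), roots_X_sub_C]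
      rfl
    have hqcard : (q.roots.filter (fun x => 0 < x)).card = N := by
      rw [hroots, Multiset.filter_cons, if_pos hrpos] at hcard
      simp at hcard
      omega
    have h1 := ih q hq0 hqcard
    have h2 := signChanges_mul_X_sub_C q hq0 r hrpos
    rw [hfact] at h2
    omega

end Descartes
namespace Descartes

lemma comp_neg_X_coeff (p : ℝ[X]) (i : ℕ) :
    (p.comp (-X)).coeff i = (-1) ^ i * p.coeff i := by
  induction p using Polynomial.induction_on' with
  | add p q hp hq => rw [add_comp, coeff_add, hp, hq, coeff_add, mul_add]
  | monomial e a =>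
    rw [monomial_comp, coeff_monomial]
    have h1 : (-X : ℝ[X]) ^ e = C ((-1) ^ e) * X ^ e := by
      rw [neg_pow, C_pow, map_neg, C_1]
    rw [h1, ← mul_assoc, ← C_mul, coeff_C_mul, coeff_X_pow]
    by_cases h : e = i
    · subst h; simp; ring
    · rw [if_neg fun hh => h hh.symm, if_neg h]; simp

lemma comp_neg_X_natDegree (p : ℝ[X]) : (p.comp (-X)).natDegree = p.natDegree := by
  rw [natDegree_comp]
  simp

lemma comp_neg_X_ne_zero {p : ℝ[X]} (hp : p ≠ 0) : p.comp (-X) ≠ 0 := by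
  intro h
  apply hp
  apply Polynomial.ext
  intro i
  have h2 := comp_neg_X_coeff p i
  rw [h, coeff_zero] at h2
  rcases mul_eq_zero.mp h2.symm with h1 | h1
  · exact absurd h1 (pow_ne_zero _ (by norm_num))
  · simpa using h1

lemma comp_neg_X_roots (p : ℝ[X]) (hp : p ≠ 0)
    (hreal : (p.roots).card = p.natDegree) :
    (p.comp (-X)).roots = p.roots.map (fun x => -x) := by
  have hlc : p.leadingCoeff ≠ 0 := leadingCoeff_ne_zero.mpr hp
  conv_lhs => rw [← C_leadingCoeff_mul_prod_multiset_X_sub_C hreal]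
  rw [mul_comp, C_comp, multiset_prod_comp, Multiset.map_map]
  have hmap : (p.roots.map fun a => (X - C a).comp (-X))
      = p.roots.map fun a => (-1) * (X - C (-a)) :=
    Multiset.map_congr rfl (fun a _ => by
      rw [sub_comp, X_comp, C_comp, C_neg]; ring)
  rw [show ((Multiset.map ((fun p => p.comp (-X)) ∘ fun a => X - C a) p.roots))
      = (p.roots.map fun a => (X - C a).comp (-X)) from rfl, hmap]
  rw [Multiset.prod_map_mul]
  rw [Multiset.map_const', Multiset.prod_replicate]
  have hmm : (p.roots.map fun a => X - C (-a))
      = (p.roots.map (fun x => -x)).map fun a => X - C a := by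
    rw [Multiset.map_map]; rfl
  rw [hmm]
  have hpow : ((-1 : ℝ[X]) ^ Multiset.card p.roots) = C ((-1 : ℝ) ^ Multiset.card p.roots) := by
    rw [C_pow, map_neg, C_1]
  rw [hpow, ← mul_assoc, ← C_mul]
  rw [roots_C_mul _ (by
    apply mul_ne_zero hlc
    exact pow_ne_zero _ (by norm_num))]
  exact roots_multiset_prod_X_sub_C _

/-- counting bound over an increasing chain -/
lemma count_pairs_le (P₁ P₂ : ℕ × ℕ → Bool) :
    ∀ (L : List ℕ), L.Chain' (· < ·) →
    (∀ pr ∈ L.zip L.tail,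
      ((if P₁ pr then 1 else 0) : ℕ) + (if P₂ pr then 1 else 0) ≤ pr.2 - pr.1) →
    ∀ a ∈ L.head?, ∀ z ∈ L.getLast?,
      (L.zip L.tail).countP P₁ + (L.zip L.tail).countP P₂ ≤ z - a
  | [], _, _, a, ha, z, hz => by simp at ha
  | [i], _, _, a, ha, z, hz => by
    simp at ha hz; subst ha; subst hz; simp
  | i :: j :: t, hc, hpair, a, ha, z, hz => by
    simp only [List.head?_cons, Option.mem_def, Option.some.injEq] at ha
    subst ha
    rw [List.getLast?_cons_cons] at hz
    have hc' := List.isChain_cons_cons.mp hc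
    have hij : i < j := hc'.1
    have hjz : j ≤ z := by
      have := mem_le_getLast hc'.2 j (by simp) z hz
      exact this
    have IH := count_pairs_le P₁ P₂ (j :: t) hc'.2
      (fun pr hpr => hpair pr (by
        rw [List.tail_cons, List.zip_cons_cons]
        exact List.mem_cons_of_mem _ hpr)) j rfl z hz
    have hfst := hpair (i, j) (by rw [List.tail_cons, List.zip_cons_cons]; simp)
    simp only [List.tail_cons] at IH
    rw [List.tail_cons, List.zip_cons_cons, List.countP_cons, List.countP_cons]
    simp only at hfst
    by_cases h1 : P₁ (i, j) <;> by_cases h2 : P₂ (i, j) <;>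
      simp only [h1, h2, if_true, if_false] at hfst ⊢ <;> omega

end Descartes
namespace Descartes

lemma upper_bound (p : ℝ[X]) (hp : p ≠ 0) (h0 : p.coeff 0 ≠ 0) :
    signChanges p + signChanges (p.comp (-X)) ≤ p.natDegree := by
  have hdeg : (p.comp (-X)).natDegree = p.natDegree := comp_neg_X_natDegree p
  have hidx : idxList (p.comp (-X)) = idxList p := by
    rw [idxList, idxList, hdeg]
    apply List.filter_congr
    intro i _
    simp only [decide_eq_decide]
    rw [comp_neg_X_coeff]
    have hne : ((-1 : ℝ)) ^ i ≠ 0 := pow_ne_zero _ (by norm_num)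
    constructor
    · intro h hc; exact h (by rw [hc, mul_zero])
    · intro h hc
      rcases mul_eq_zero.mp hc with h1 | h1
      · exact hne h1
      · exact h h1
  rw [signChanges_eq_idx p, signChanges_eq_idx (p.comp (-X)), hidx]
  have hhead := idxList_head? (p := p) h0
  have hlast := idxList_getLast? hp
  have hchain := idxList_chain p
  have hmain := count_pairs_le (fun pr => decide (p.coeff pr.1 * p.coeff pr.2 < 0))
      (fun pr => decide ((p.comp (-X)).coeff pr.1 * (p.comp (-X)).coeff pr.2 < 0))
      (idxList p) hchain ?_ 0 hhead p.natDegree hlast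
  · omega
  · rintro ⟨i, j⟩ hpr
    have hij : i < j := chain'_mem_zip hchain _ hpr
    have hi : p.coeff i ≠ 0 := (mem_idxList.mp (List.of_mem_zip hpr).1).2
    have hj : p.coeff j ≠ 0 :=
      (mem_idxList.mp (List.mem_of_mem_tail (List.of_mem_zip hpr).2)).2
    simp only
    have hcc : p.coeff i * p.coeff j ≠ 0 := mul_ne_zero hi hj
    have hprod : (p.comp (-X)).coeff i * (p.comp (-X)).coeff j
        = (-1 : ℝ) ^ (i + j) * (p.coeff i * p.coeff j) := by
      rw [comp_neg_X_coeff, comp_neg_X_coeff, pow_add]; ring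
    rcases Nat.even_or_odd (i + j) with he | ho
    · have h2 : j - i ≥ 2 := by obtain ⟨w, hw⟩ := he; omega
      have hb1 : (if decide (p.coeff i * p.coeff j < 0) = true then (1:ℕ) else 0) ≤ 1 := by
        split <;> omega
      have hb2 : (if decide ((p.comp (-X)).coeff i * (p.comp (-X)).coeff j < 0) = true
          then (1:ℕ) else 0) ≤ 1 := by split <;> omega
      omega
    · have hpow : ((-1 : ℝ)) ^ (i + j) = -1 := ho.neg_one_pow
      rw [hpow] at hprod
      by_cases hlt : p.coeff i * p.coeff j < 0
      · have h2 : ¬ ((p.comp (-X)).coeff i * (p.comp (-X)).coeff j < 0) := by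
          rw [hprod]; linarith
        simp [hlt, h2]
        omega
      · have hgt : 0 < p.coeff i * p.coeff j := by
          rcases lt_trichotomy (p.coeff i * p.coeff j) 0 with h1 | h1 | h1
          · exact absurd h1 hlt
          · exact absurd h1 hcc
          · exact h1
        have h2 : (p.comp (-X)).coeff i * (p.comp (-X)).coeff j < 0 := by
          rw [hprod]; linarith
        simp [hlt, h2]
        omega

/-- number of negative roots equals positive roots of p(-X) -/
lemma neg_roots_card (p : ℝ[X]) (hp : p ≠ 0) (hreal : (p.roots).card = p.natDegree) :
    ((p.comp (-X)).roots.filter (fun x => 0 < x)).card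
      = (p.roots.filter (fun x => x < 0)).card := by
  rw [comp_neg_X_roots p hp hreal, Multiset.filter_map, Multiset.card_map]
  congr 1
  apply Multiset.filter_congr
  intro x _
  simp

theorem main_reduced (p : ℝ[X]) (hp : p ≠ 0) (h0 : p.coeff 0 ≠ 0)
    (hreal : (p.roots).card = p.natDegree) :
    (p.roots.filter (fun x => 0 < x)).card = signChanges p := by
  have h1 : (p.roots.filter (fun x => 0 < x)).card ≤ signChanges p :=
    card_pos_roots_le _ p hp rfl
  have hptne : p.comp (-X) ≠ 0 := comp_neg_X_ne_zero hp
  have h2 : (p.roots.filter (fun x => x < 0)).card ≤ signChanges (p.comp (-X)) := by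
    rw [← neg_roots_card p hp hreal]
    exact card_pos_roots_le _ _ hptne rfl
  have h3 := upper_bound p hp h0
  have h00 : (0 : ℝ) ∉ p.roots := by
    intro h
    have := isRoot_of_mem_roots h
    rw [IsRoot, ← coeff_zero_eq_eval_zero] at this
    exact h0 this
  have h4 : (p.roots.filter (fun x => 0 < x)).card
      + (p.roots.filter (fun x => x < 0)).card = p.natDegree := by
    have h5 := Multiset.filter_add_not (fun x => 0 < x) p.roots
    have h6 : p.roots.filter (fun x => ¬ 0 < x) = p.roots.filter (fun x => x < 0) := by
      apply Multiset.filter_congr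
      intro x hx
      have hx0 : x ≠ 0 := fun h => h00 (h ▸ hx)
      constructor
      · intro h; rcases lt_trichotomy x 0 with h1 | h1 | h1
        · exact h1
        · exact absurd h1 hx0
        · exact absurd h1 h
      · intro h; linarith
    rw [h6] at h5
    have := congrArg Multiset.card h5
    rw [Multiset.card_add] at this
    omega
  omega

end Descartes
namespace Descartes

theorem main_final (p : ℝ[X]) (hp : p ≠ 0)
    (hreal : (p.roots).card = p.natDegree) :
    (p.roots.filter (fun x => 0 < x)).card = signChanges p := by
  set m := rootMultiplicity 0 p with hm
  have hdvd : (X : ℝ[X]) ^ m ∣ p := by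
    have := p.pow_rootMultiplicity_dvd 0
    rwa [C_0, sub_zero] at this
  obtain ⟨q, hq⟩ := hdvd
  have hq0 : q ≠ 0 := by rintro rfl; rw [mul_zero] at hq; exact hp hq
  have hXm : (X : ℝ[X]) ^ m ≠ 0 := pow_ne_zero _ X_ne_zero
  have hrmq : rootMultiplicity 0 q = 0 := by
    have h1 := rootMultiplicity_mul (x := (0:ℝ)) (hq ▸ hp)
    have h2 : rootMultiplicity (0:ℝ) ((X:ℝ[X]) ^ m) = m := by
      have := rootMultiplicity_X_sub_C_pow (R := ℝ) (0:ℝ) m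
      rwa [C_0, sub_zero] at this
    rw [← hq, ← hm, h2] at h1
    omega
  have hq00 : q.coeff 0 ≠ 0 := by
    rw [coeff_zero_eq_eval_zero]
    intro h
    have : 0 < rootMultiplicity 0 q := (rootMultiplicity_pos hq0).mpr h
    omega
  have hroots : p.roots = Multiset.replicate m 0 + q.roots := by
    rw [hq, roots_mul (hq ▸ hp), roots_pow, roots_X, Multiset.nsmul_singleton]
  have hdegq : p.natDegree = m + q.natDegree := by
    rw [hq, natDegree_mul hXm hq0, natDegree_X_pow]
  have hcardq : q.roots.card = q.natDegree := by
    rw [hroots, Multiset.card_add, Multiset.card_replicate] at hreal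
    omega
  have hfilter : p.roots.filter (fun x => 0 < x) = q.roots.filter (fun x => 0 < x) := by
    rw [hroots, Multiset.filter_add]
    have hz : Multiset.filter (fun x => 0 < x) (Multiset.replicate m (0:ℝ)) = 0 := by
      rw [Multiset.filter_eq_nil]
      intro a ha
      rw [Multiset.eq_of_mem_replicate ha]
      simp
    rw [hz, zero_add]
  have hcoe : ∀ i, p.coeff i = if m ≤ i then q.coeff (i - m) else 0 := by
    intro i
    rw [hq, mul_comm, coeff_mul_X_pow']
  have hlist : nonzeroCoeffList p = nonzeroCoeffList q := by
    rw [nonzeroCoeffList, nonzeroCoeffList, hdegq,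
      show m + q.natDegree + 1 = m + (q.natDegree + 1) by omega,
      List.range_add, List.map_append, List.filter_append]
    have hfirst : ((List.range m).map p.coeff).filter (fun a => decide (a ≠ 0)) = [] := by
      rw [List.filter_eq_nil_iff]
      intro x hx
      obtain ⟨i, hi, rfl⟩ := List.mem_map.mp hx
      rw [List.mem_range] at hi
      rw [hcoe i, if_neg (by omega)]
      simp
    have hsecond : ((List.range (q.natDegree + 1)).map (m + ·)).map p.coeff
        = (List.range (q.natDegree + 1)).map q.coeff := by
      rw [List.map_map]
      apply List.map_congr_left
      intro i _
      show p.coeff (m + i) = q.coeff i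
      rw [hcoe (m + i), if_pos (by omega)]
      congr 1
      omega
    rw [hfirst, hsecond, List.nil_append]
  have hsc : signChanges p = signChanges q := by
    rw [signChanges, signChanges, hlist]
  rw [hfilter, hsc]
  exact main_reduced q hq0 hq00 hcardq

end Descartes


/-- Harriot–Descartes rule of signs, exact form: if all roots of a real polynomial
are real (it splits over ℝ), the number of positive roots counted with multiplicity
equals the number of sign changes of its nonzero coefficients. -/
theorem descartes_rule_of_signs_exact (p : ℝ[X]) (hp : p ≠ 0)
    (hreal : (p.roots).card = p.natDegree) :
    (p.roots.filter (fun x => 0 < x)).card = signChanges p := by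
  exact Descartes.main_final p hp hreal
end

section
/- For any polynomial p with real coefficients, the number of positive real roots of p counted with multiplicity is at most the number of sign changes in the sequence of nonzero coefficients of p. -/
open Polynomial

set_option maxHeartbeats 2000000

noncomputable def chg : List ℝ → ℕ
  | a :: b :: t => (if a * b < 0 then 1 else 0) + chg (b :: t)
  | _ => 0

noncomputable def sv (l : List ℝ) : ℕ := chg (l.filter (fun a => decide (a ≠ 0)))

noncomputable def convL (r : ℝ) : ℝ → List ℝ → List ℝ
  | prev, [] => [prev]
  | prev, x :: t => (prev - r * x) :: convL r x t

lemma chg_cons_cons (a b : ℝ) (t : List ℝ) :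
    chg (a :: b :: t) = (if a * b < 0 then 1 else 0) + chg (b :: t) := rfl

lemma sv_def (l : List ℝ) : sv l = chg (l.filter (fun a => decide (a ≠ 0))) := rfl

lemma convL_cons (r prev x : ℝ) (t : List ℝ) :
    convL r prev (x :: t) = (prev - r * x) :: convL r x t := rfl

lemma filter_nz_cons_ne {a : ℝ} (l : List ℝ) (ha : a ≠ 0) :
    (a :: l).filter (fun a => decide (a ≠ 0)) = a :: l.filter (fun a => decide (a ≠ 0)) := by
  simp [List.filter_cons, ha]

lemma filter_nz_cons_eq {a : ℝ} (l : List ℝ) (ha : a = 0) :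
    (a :: l).filter (fun a => decide (a ≠ 0)) = l.filter (fun a => decide (a ≠ 0)) := by
  simp [List.filter_cons, ha]

lemma filter_nz_allzero (l : List ℝ) (h : ∀ y ∈ l, y = 0) :
    l.filter (fun a => decide (a ≠ 0)) = [] := by
  apply List.filter_eq_nil_iff.mpr
  intro a ha
  simp [h a ha]

lemma decomposeList (l : List ℝ) :
    (∀ y ∈ l, y = 0) ∨ ∃ zs x rest, l = zs ++ x :: rest ∧ (∀ y ∈ zs, y = 0) ∧ x ≠ 0 := by
  induction l with
  | nil => left; simp
  | cons a t ih =>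
    by_cases ha : a = 0
    · rcases ih with h | ⟨zs, x, rest, rfl, hzs, hx⟩
      · left; intro y hy; rcases List.mem_cons.mp hy with h1 | h1
        · exact h1 ▸ ha
        · exact h y h1
      · right; refine ⟨a :: zs, x, rest, by simp, ?_, hx⟩
        intro y hy; rcases List.mem_cons.mp hy with h1 | h1
        · exact h1 ▸ ha
        · exact hzs y h1
    · right; exact ⟨[], a, t, rfl, by simp, ha⟩

lemma convL_cons_zero (r prev : ℝ) (t : List ℝ) :
    convL r prev (0 :: t) = prev :: convL r 0 t := by
  simp [convL]

lemma convL_allzero (r : ℝ) : ∀ (l : List ℝ), (∀ y ∈ l, y = 0) → ∀ prev,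
    convL r prev l = prev :: l.map (fun _ => (0:ℝ)) := by
  intro l
  induction l with
  | nil => intro _ prev; rfl
  | cons a t ih =>
    intro h prev
    have ha : a = 0 := h a (by simp)
    subst ha
    rw [convL_cons_zero, ih (fun y hy => h y (by simp [hy])) 0]
    simp

lemma convL_zeroPrefix (r x : ℝ) (rest : List ℝ) :
    ∀ (zs : List ℝ), (∀ y ∈ zs, y = 0) →
    convL r 0 (zs ++ x :: rest) = zs ++ (0 - r * x) :: convL r x rest := by
  intro zs
  induction zs with
  | nil => intro _; rfl
  | cons z zs' ih =>
    intro h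
    have hz : z = 0 := h z (by simp)
    subst hz
    rw [List.cons_append, convL_cons_zero, ih (fun y hy => h y (by simp [hy]))]
    rfl

lemma ind1 (r prev x fn : ℝ) (hr : 0 < r) (hx : x ≠ 0) (hfn : fn ≠ 0) (hm : prev = r * x) :
    (if prev * x < 0 then 1 else 0) + (if 0 < fn * x then 1 else 0)
      ≤ (if 0 < fn * prev then 1 else 0) := by
  have h0 : 0 < r * (x * x) := mul_pos hr
    (by rcases hx.lt_or_gt with h|h; exacts [mul_pos_of_neg_of_neg h h, mul_pos h h])
  have h1 : ¬ (prev * x < 0) := by subst hm; nlinarith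
  rw [if_neg h1]
  subst hm
  split_ifs with h2 h3
  · omega
  · exact absurd (by nlinarith : (0:ℝ) < fn * (r * x)) h3
  · omega
  · omega

lemma ind2 (r prev x fn : ℝ) (hr : 0 < r) (hprev : prev ≠ 0) (hx : x ≠ 0) (hfn : fn ≠ 0)
    (hm : prev - r * x ≠ 0) :
    (if prev * x < 0 then 1 else 0) + (if 0 < fn * x then 1 else 0)
      ≤ (if (prev - r * x) * fn < 0 then 1 else 0) + (if 0 < (prev - r * x) * prev then 1 else 0) := by
  rcases hprev.lt_or_gt with hp|hp <;> rcases hx.lt_or_gt with hxx|hxx <;>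
    rcases hfn.lt_or_gt with hf|hf <;> rcases hm.lt_or_gt with hmm|hmm <;>
    split_ifs <;> first | omega | (exfalso; nlinarith)

lemma ind3 (r prev x fn : ℝ) (hr : 0 < r) (hprev : prev ≠ 0) (hx : x ≠ 0) (hfn : fn ≠ 0) :
    (if prev * x < 0 then 1 else 0) + (if 0 < fn * x then 1 else 0)
      ≤ (if prev * (0 - r * x) < 0 then 1 else 0) + (if (0 - r * x) * fn < 0 then 1 else 0) + 1 := by
  rcases hprev.lt_or_gt with hp|hp <;> rcases hx.lt_or_gt with hxx|hxx <;>
    rcases hfn.lt_or_gt with hf|hf <;>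
    split_ifs <;> first | omega | (exfalso; nlinarith)

lemma ind4 (r x fn : ℝ) (hr : 0 < r) (hx : x ≠ 0) (hfn : fn ≠ 0) :
    ((0 - r * x) * fn < 0) ↔ (0 < fn * x) := by
  constructor <;> intro h <;> nlinarith

lemma Tallzero (r prev : ℝ) (l : List ℝ) (h : ∀ y ∈ l, y = 0) (hprev : prev ≠ 0) :
    ∃ fn F, (convL r prev l).filter (fun a => decide (a ≠ 0)) = fn :: F ∧ fn ≠ 0 ∧
      sv (prev :: l) + 1 ≤ chg (fn :: F) + (if 0 < fn * prev then 1 else 0) := by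
  refine ⟨prev, [], ?_, hprev, ?_⟩
  · rw [convL_allzero r l h prev, filter_nz_cons_ne _ hprev, filter_nz_allzero]
    intro y hy
    rcases List.mem_map.mp hy with ⟨a, _, rfl⟩
    rfl
  · rw [sv_def, filter_nz_cons_ne _ hprev, filter_nz_allzero l h, if_pos (mul_self_pos.mpr hprev)]

lemma Tmain (r : ℝ) (hr : 0 < r) :
    ∀ (N : ℕ) (l : List ℝ) (prev : ℝ), l.length ≤ N → prev ≠ 0 →
      ∃ fn F, (convL r prev l).filter (fun a => decide (a ≠ 0)) = fn :: F ∧ fn ≠ 0 ∧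
        sv (prev :: l) + 1 ≤ chg (fn :: F) + (if 0 < fn * prev then 1 else 0) := by
  intro N
  induction N with
  | zero =>
    intro l prev hlen hprev
    have hl : l = [] := List.length_eq_zero_iff.mp (Nat.le_zero.mp hlen)
    subst hl
    exact Tallzero r prev [] (by simp) hprev
  | succ N ih =>
    intro l prev hlen hprev
    rcases decomposeList l with hz | ⟨zs, x, rest, rfl, hzs, hx⟩
    · exact Tallzero r prev l hz hprev
    · have hrestlen : rest.length ≤ N := by
        rw [List.length_append, List.length_cons] at hlen; omega
      obtain ⟨fn, F, hF, hfn, hineq⟩ := ih rest x hrestlen hx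
      have esvx : sv (x :: rest) = chg (x :: rest.filter (fun a => decide (a ≠ 0))) := by
        rw [sv_def, filter_nz_cons_ne _ hx]
      have esv : sv (prev :: (zs ++ x :: rest)) =
          (if prev * x < 0 then 1 else 0) + sv (x :: rest) := by
        rw [sv_def, filter_nz_cons_ne _ hprev, List.filter_append, filter_nz_allzero zs hzs,
            List.nil_append, filter_nz_cons_ne _ hx, chg_cons_cons, esvx]
      cases zs with
      | nil =>
        rw [List.nil_append] at esv ⊢
        rw [convL_cons]
        by_cases hm : prev - r * x = 0
        · refine ⟨fn, F, ?_, hfn, ?_⟩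
          · rw [filter_nz_cons_eq _ hm, hF]
          · rw [esv]
            have key := ind1 r prev x fn hr hx hfn (by linarith)
            omega
        · refine ⟨prev - r * x, fn :: F, ?_, hm, ?_⟩
          · rw [filter_nz_cons_ne _ hm, hF]
          · rw [esv, chg_cons_cons]
            have key := ind2 r prev x fn hr hprev hx hfn hm
            omega
      | cons z zs' =>
        have hz : z = 0 := hzs z (by simp)
        subst hz
        have hzs' : ∀ y ∈ zs', y = 0 := fun y hy => hzs y (by simp [hy])
        have hrx : (0 : ℝ) - r * x ≠ 0 := by
          have : r * x ≠ 0 := mul_ne_zero hr.ne' hx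
          intro h; apply this; linarith
        rw [List.cons_append, convL_cons_zero, convL_zeroPrefix r x rest zs' hzs']
        refine ⟨prev, (0 - r * x) :: fn :: F, ?_, hprev, ?_⟩
        · rw [filter_nz_cons_ne _ hprev, List.filter_append, filter_nz_allzero zs' hzs',
              List.nil_append, filter_nz_cons_ne _ hrx, hF]
        · rw [List.cons_append] at esv
          rw [esv, chg_cons_cons, chg_cons_cons, if_pos (mul_self_pos.mpr hprev)]
          have key := ind3 r prev x fn hr hprev hx hfn
          omega

lemma listKey (r : ℝ) (hr : 0 < r) (b : List ℝ) (hb : ∃ z ∈ b, z ≠ 0) :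
    sv b + 1 ≤ sv (convL r 0 b) := by
  rcases decomposeList b with hz | ⟨zs, x, rest, rfl, hzs, hx⟩
  · obtain ⟨z, hzm, hzne⟩ := hb
    exact absurd (hz z hzm) hzne
  · obtain ⟨fn, F, hF, hfn, hineq⟩ := Tmain r hr rest.length rest x le_rfl hx
    have hrx : (0 : ℝ) - r * x ≠ 0 := by
      have : r * x ≠ 0 := mul_ne_zero hr.ne' hx
      intro h; apply this; linarith
    have esvx : sv (x :: rest) = chg (x :: rest.filter (fun a => decide (a ≠ 0))) := by
      rw [sv_def, filter_nz_cons_ne _ hx]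
    rw [convL_zeroPrefix r x rest zs hzs, sv_def, sv_def, List.filter_append,
        filter_nz_allzero zs hzs, List.nil_append, filter_nz_cons_ne _ hx,
        List.filter_append, filter_nz_allzero zs hzs, List.nil_append,
        filter_nz_cons_ne _ hrx, hF, chg_cons_cons]
    rw [esvx] at hineq
    have e4 : (if (0 - r * x) * fn < 0 then 1 else 0) = (if 0 < fn * x then (1:ℕ) else 0) :=
      if_congr (ind4 r x fn hr hx hfn) rfl rfl
    omega

lemma chg_eq_countP : ∀ l : List ℝ,
    (l.zip l.tail).countP (fun ab => decide (ab.1 * ab.2 < 0)) = chg l := by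
  intro l
  induction l with
  | nil => rfl
  | cons a t ih =>
    cases t with
    | nil => rfl
    | cons b t' =>
      simp only [List.tail_cons] at ih
      show List.countP _ ((a, b) :: ((b :: t').zip t')) = _
      rw [List.countP_cons, ih, chg_cons_cons]
      simp only [decide_eq_true_eq]
      omega

lemma signChanges_eq (p : ℝ[X]) :
    signChanges p = sv ((List.range (p.natDegree + 1)).map p.coeff) :=
  chg_eq_countP _

lemma convL_map (r : ℝ) (g : ℕ → ℝ) : ∀ (m k : ℕ),
    convL r (g k) ((List.range' (k+1) m).map g)
      = ((List.range' k m).map (fun j => g j - r * g (j+1))) ++ [g (k+m)] := by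
  intro m
  induction m with
  | zero => intro k; simp [convL]
  | succ m ih =>
    intro k
    rw [List.range'_succ, List.map_cons, convL_cons, ih (k+1),
        List.range'_succ (s := k), List.map_cons, List.cons_append]
    have h1 : k + (m + 1) = (k + 1) + m := by omega
    rw [h1]

lemma coeffList_mul (r : ℝ) (q : ℝ[X]) :
    (List.range (q.natDegree + 2)).map ((X - C r) * q).coeff
      = convL r 0 ((List.range (q.natDegree + 1)).map q.coeff) := by
  set n := q.natDegree with hn
  have hc0 : ((X - C r) * q).coeff 0 = 0 - r * q.coeff 0 := by
    rw [mul_coeff_zero]; simp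
  have hck : ∀ k, ((X - C r) * q).coeff (k+1) = q.coeff k - r * q.coeff (k+1) := by
    intro k
    rw [sub_mul, X_mul, coeff_sub, coeff_mul_X, coeff_C_mul]
  have hshift : ∀ (m s : ℕ),
      (List.range' (s+1) m).map ((X - C r) * q).coeff
        = (List.range' s m).map (fun j => q.coeff j - r * q.coeff (j+1)) := by
    intro m
    induction m with
    | zero => intro s; rfl
    | succ m ih =>
      intro s
      rw [List.range'_succ, List.map_cons, List.range'_succ (s := s), List.map_cons,
          ih (s+1), hck s]
  -- RHS
  simp only [List.range_eq_range']
  rw [show List.range' 0 (n+1) = 0 :: List.range' 1 n from List.range'_succ .., List.map_cons,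
      convL_cons]
  have hcm := convL_map r q.coeff n 0
  norm_num at hcm
  rw [hcm]
  -- LHS
  rw [show List.range' 0 (n+2) = 0 :: List.range' 1 (n+1) from List.range'_succ ..,
      List.map_cons, hc0,
      show List.range' 1 (n+1) = List.range' 1 n ++ [1 + n] from by
        rw [List.range'_concat]; norm_num,
      List.map_append, List.map_cons, hshift n 0]
  have hlast : ((X - C r) * q).coeff (1 + n) = q.coeff n := by
    rw [show 1 + n = n + 1 from by omega, hck n,
        coeff_eq_zero_of_natDegree_lt (by omega : q.natDegree < n + 1)]
    ring
  rw [hlast]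
  rfl

lemma keyPoly (r : ℝ) (hr : 0 < r) (q : ℝ[X]) (hq : q ≠ 0) :
    signChanges q + 1 ≤ signChanges ((X - C r) * q) := by
  have hdeg : ((X - C r) * q).natDegree = q.natDegree + 1 := by
    rw [natDegree_mul (X_sub_C_ne_zero r) hq, natDegree_X_sub_C]; omega
  rw [signChanges_eq, signChanges_eq, hdeg,
      show q.natDegree + 1 + 1 = q.natDegree + 2 from rfl, coeffList_mul]
  refine listKey r hr _ ⟨q.coeff q.natDegree, ?_, ?_⟩
  · exact List.mem_map.mpr ⟨q.natDegree, List.mem_range.mpr (by omega), rfl⟩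
  · exact mt leadingCoeff_eq_zero.mp hq

lemma descartes_aux : ∀ (d : ℕ) (p : ℝ[X]), p ≠ 0 → p.natDegree ≤ d →
    (p.roots.filter (fun x => 0 < x)).card ≤ signChanges p := by
  intro d
  induction d with
  | zero =>
    intro p hp hdeg
    obtain ⟨a, rfl⟩ := natDegree_eq_zero.mp (Nat.le_zero.mp hdeg)
    rw [roots_C]
    simp
  | succ d ih =>
    intro p hp hdeg
    by_cases hex : ∃ x ∈ p.roots, 0 < x
    · obtain ⟨r, hrmem, hrpos⟩ := hex
      have hroot : IsRoot p r := (mem_roots'.mp hrmem).2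
      obtain ⟨q, hq⟩ := dvd_iff_isRoot.mpr hroot
      have hq0 : q ≠ 0 := by rintro rfl; rw [mul_zero] at hq; exact hp hq
      have hdq : q.natDegree ≤ d := by
        rw [hq, natDegree_mul (X_sub_C_ne_zero r) hq0, natDegree_X_sub_C] at hdeg; omega
      rw [hq, roots_mul (by rw [← hq]; exact hp), roots_X_sub_C, Multiset.filter_add,
          Multiset.card_add]
      have h1 : ({r} : Multiset ℝ).filter (fun x => 0 < x) = {r} := by
        rw [Multiset.filter_singleton, if_pos hrpos]
      rw [h1, Multiset.card_singleton]
      have h2 := ih q hq0 hdq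
      have h3 := keyPoly r hrpos q hq0
      omega
    · have h0 : p.roots.filter (fun x => 0 < x) = 0 :=
        Multiset.filter_eq_nil.mpr (fun a ha h => hex ⟨a, ha, h⟩)
      rw [h0]
      simp

/-- Descartes' rule of signs (inequality form): the number of positive real roots
of a real polynomial, counted with multiplicity, is at most the number of sign
changes in its sequence of nonzero coefficients. -/
theorem descartes_rule_of_signs (p : ℝ[X]) (hp : p ≠ 0) :
    (p.roots.filter (fun x => 0 < x)).card ≤ signChanges p := by
  exact descartes_aux p.natDegree p hp le_rfl
end
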